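/- Let M be a maximal ideal in B₁(X) and f ∈ B₁(X). Then M(f) > 0 in the lattice-ordered quotient field B₁(X)/M if and only if there exists Z ∈ Z_B[M] such that f(x) > 0 for all x ∈ Z. -/

import Mathlib

open Filter Topology

/-- A function `f : X → ℝ` is Baire one if it is a pointwise limit of a
sequence of continuous functions. -/
def IsBaireOne {X : Type*} [TopologicalSpace X] (f : X → ℝ) : Prop :=
  ∃ F : ℕ → C(X, ℝ), ∀ x, Tendsto (fun n => F n x) atTop (𝓝 (f x))

/-- The ring `B₁(X)` of real valued Baire one functions on `X`, as a subring
of the ring of all functions `X → ℝ`. -/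
def B1 (X : Type*) [TopologicalSpace X] : Subring (X → ℝ) where
  carrier := {f | IsBaireOne f}
  zero_mem' := ⟨fun _ => 0, fun x => by simpa using tendsto_const_nhds⟩
  one_mem' := ⟨fun _ => 1, fun x => by simpa using tendsto_const_nhds⟩
  add_mem' := by
    rintro f g ⟨F, hF⟩ ⟨G, hG⟩
    exact ⟨fun n => F n + G n, fun x => by simpa using (hF x).add (hG x)⟩
  mul_mem' := by
    rintro f g ⟨F, hF⟩ ⟨G, hG⟩
    exact ⟨fun n => F n * G n, fun x => by simpa using (hF x).mul (hG x)⟩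
  neg_mem' := by
    rintro f ⟨F, hF⟩
    exact ⟨fun n => -F n, fun x => by simpa using (hF x).neg⟩

variable {X : Type*} [TopologicalSpace X]

/-- The constant function with value `r`, as an element of `B₁(X)`. -/
def bconst (X : Type*) [TopologicalSpace X] (r : ℝ) : B1 X :=
  ⟨fun _ => r, ⟨fun _ => ContinuousMap.const X r, fun x => by simpa using tendsto_const_nhds⟩⟩

theorem babs_mem (f : B1 X) : (fun x => |(f : X → ℝ) x|) ∈ B1 X := by
  obtain ⟨F, hF⟩ := f.2
  exact ⟨fun n => ⟨fun x => |F n x|, (F n).continuous.abs⟩, fun x => (hF x).abs⟩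

/-- The absolute value `|f|` of a Baire one function. -/
def babs (f : B1 X) : B1 X := ⟨fun x => |(f : X → ℝ) x|, babs_mem f⟩

/-- The zero set `Z(f)` of `f ∈ B₁(X)`. -/
def zset (f : B1 X) : Set X := {x | (f : X → ℝ) x = 0}

/-- `Z(B₁(X))`, the family of all zero sets of Baire one functions on `X`. -/
def zsets (X : Type*) [TopologicalSpace X] : Set (Set X) := {Z | ∃ f : B1 X, zset f = Z}

/-- `Z_B[I] = {Z(f) : f ∈ I}` for an ideal `I` of `B₁(X)`. -/
def zbi (I : Ideal (B1 X)) : Set (Set X) := {Z | ∃ f ∈ I, zset f = Z}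

/-- A `Z_B`-filter on `X`: a nonempty family of zero sets of Baire one functions,
not containing `∅`, closed under finite intersections and upward closed in `Z(B₁(X))`. -/
def IsZBFilter (F : Set (Set X)) : Prop :=
  F.Nonempty ∧ F ⊆ zsets X ∧ ∅ ∉ F ∧
    (∀ Z₁ ∈ F, ∀ Z₂ ∈ F, Z₁ ∩ Z₂ ∈ F) ∧
    (∀ Z ∈ F, ∀ Z' ∈ zsets X, Z ⊆ Z' → Z' ∈ F)

/-- A `Z_B`-ultrafilter on `X`: a maximal `Z_B`-filter. -/
def IsZBUltrafilter (U : Set (Set X)) : Prop :=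
  IsZBFilter U ∧ ∀ F : Set (Set X), IsZBFilter F → U ⊆ F → F = U

/-- The finite intersection property: every nonempty finite subfamily has
nonempty intersection. -/
def FIP {X : Type*} (B : Set (Set X)) : Prop :=
  ∀ S : Finset (Set X), ↑S ⊆ B → S.Nonempty → (⋂₀ (S : Set (Set X))).Nonempty

/-- An ideal `I` of `B₁(X)` is a `Z_B`-ideal if `Z_B⁻¹[Z_B[I]] = I`. -/
def IsZBIdeal (I : Ideal (B1 X)) : Prop :=
  ∀ f : B1 X, zset f ∈ zbi I → f ∈ I

/-- An ideal of `B₁(X)` is fixed if the zero sets of its members have a common point. -/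
def FixedIdeal (I : Ideal (B1 X)) : Prop :=
  (⋂ f ∈ (I : Set (B1 X)), zset f).Nonempty

/-- A prime `Z_B`-filter. -/
def IsPrimeZBFilter (F : Set (Set X)) : Prop :=
  IsZBFilter F ∧ ∀ Z₁ ∈ zsets X, ∀ Z₂ ∈ zsets X, Z₁ ∪ Z₂ ∈ F → Z₁ ∈ F ∨ Z₂ ∈ F

/-- `M(f) ≥ 0` in the quotient `B₁(X)/M`: the coset contains a nonnegative function. -/
def QNonneg (M : Ideal (B1 X)) (a : B1 X ⧸ M) : Prop :=
  ∃ g : B1 X, (∀ x, 0 ≤ (g : X → ℝ) x) ∧ Ideal.Quotient.mk M g = a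

/-- `M(f) > 0` in the quotient `B₁(X)/M`. -/
def QPos (M : Ideal (B1 X)) (a : B1 X ⧸ M) : Prop := QNonneg M a ∧ a ≠ 0

/-- A maximal ideal `M` of `B₁(X)` is real if the canonical copy of `ℝ`
(via constant functions) is all of `B₁(X)/M`. -/
def RealIdeal (M : Ideal (B1 X)) : Prop :=
  Function.Surjective (fun r : ℝ => Ideal.Quotient.mk M (bconst X r))

/-- An `F_σ` subset: a countable union of closed sets. -/
def IsFSigma {X : Type*} [TopologicalSpace X] (s : Set X) : Prop :=
  ∃ F : ℕ → Set X, (∀ n, IsClosed (F n)) ∧ s = ⋃ n, F n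

lemma inv_isBaireOne {X : Type*} [TopologicalSpace X] {h : X → ℝ}
    (hh : IsBaireOne h) (hne : ∀ x, h x ≠ 0) : IsBaireOne (fun x => (h x)⁻¹) := by
  obtain ⟨F, hF⟩ := hh
  refine ⟨fun n => ⟨fun x => F n x / ((F n x) ^ 2 + ((n : ℝ) + 1)⁻¹), ?_⟩, ?_⟩
  · exact (F n).continuous.div (((F n).continuous.pow 2).add continuous_const)
      (fun x => by positivity)
  · intro x
    have h1 : Tendsto (fun n : ℕ => ((n : ℝ) + 1)⁻¹) atTop (𝓝 0) := by
      simpa [one_div] using tendsto_one_div_add_atTop_nhds_zero_nat (𝕜 := ℝ)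
    have h2 : Tendsto (fun n => F n x / ((F n x) ^ 2 + ((n : ℝ) + 1)⁻¹)) atTop
        (𝓝 (h x / ((h x) ^ 2 + 0))) :=
      (hF x).div (((hF x).pow 2).add h1)
        (by simpa using pow_ne_zero 2 (hne x))
    have h3 : h x / ((h x) ^ 2 + 0) = (h x)⁻¹ := by
      rw [add_zero, sq]
      exact div_self_mul_self' ..
    rwa [h3] at h2

lemma isUnit_of_ne_zero' {X : Type*} [TopologicalSpace X] {w : B1 X}
    (hw : ∀ x, (w : X → ℝ) x ≠ 0) : IsUnit w := by
  refine IsUnit.of_mul_eq_one (a := w) ⟨fun x => ((w : X → ℝ) x)⁻¹, inv_isBaireOne w.2 hw⟩ ?_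
  refine Subtype.ext (funext fun x => ?_)
  simpa using mul_inv_cancel₀ (hw x)

lemma mem_of_zset_subset {X : Type*} [TopologicalSpace X]
    {M : Ideal (B1 X)} (hM : M.IsMaximal) {m k : B1 X}
    (hm : m ∈ M) (hsub : zset m ⊆ zset k) : k ∈ M := by
  by_contra hk
  have hne : Ideal.Quotient.mk M k ≠ 0 := by
    rwa [Ne, Ideal.Quotient.eq_zero_iff_mem]
  haveI := hM
  obtain ⟨v, hv⟩ := Ideal.Quotient.exists_inv hne
  obtain ⟨u, hu⟩ := Ideal.Quotient.mk_surjective v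
  have huk : u * k - 1 ∈ M := by
    refine Ideal.Quotient.eq.mp ?_
    rw [map_mul, hu, map_one, mul_comm, hv]
  set w : B1 X := m * m + (u * k - 1) * (u * k - 1) with hwdef
  have hwM : w ∈ M := M.add_mem (M.mul_mem_left m hm) (M.mul_mem_left _ huk)
  have hwne : ∀ x, (w : X → ℝ) x ≠ 0 := by
    intro x hx
    have hxw : (m : X → ℝ) x * (m : X → ℝ) x
        + ((u : X → ℝ) x * (k : X → ℝ) x - 1) * ((u : X → ℝ) x * (k : X → ℝ) x - 1) = 0 := by
      simpa [hwdef] using hx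
    have hm0 : (m : X → ℝ) x = 0 := by
      have := mul_self_nonneg ((u : X → ℝ) x * (k : X → ℝ) x - 1)
      have := mul_self_nonneg ((m : X → ℝ) x)
      nlinarith
    have hk0 : (k : X → ℝ) x = 0 := hsub hm0
    rw [hm0, hk0] at hxw
    norm_num at hxw
  exact hM.ne_top (Ideal.eq_top_of_isUnit_mem _ hwM (isUnit_of_ne_zero' hwne))

/-- For a maximal ideal `M` of `B₁(X)` and `f ∈ B₁(X)`: `M(f) > 0` in
`B₁(X)/M` iff `f` is strictly positive on some member of `Z_B[M]`. -/
theorem qpos_iff_pos_on_zset {X : Type*} [TopologicalSpace X]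
    (M : Ideal (B1 X)) (hM : M.IsMaximal) (f : B1 X) :
    QPos M (Ideal.Quotient.mk M f) ↔
      ∃ Z ∈ zbi M, ∀ x ∈ Z, 0 < (f : X → ℝ) x := by
  constructor
  · rintro ⟨⟨g, hg, hgf⟩, hne0⟩
    have hfM : f ∉ M := fun h => hne0 (Ideal.Quotient.eq_zero_iff_mem.mpr h)
    have hfq : Ideal.Quotient.mk M f ≠ 0 := by
      rwa [Ne, Ideal.Quotient.eq_zero_iff_mem]
    haveI := hM
    obtain ⟨v, hv⟩ := Ideal.Quotient.exists_inv hfq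
    obtain ⟨u, hu⟩ := Ideal.Quotient.mk_surjective v
    have huf : u * f - 1 ∈ M := by
      refine Ideal.Quotient.eq.mp ?_
      rw [map_mul, hu, map_one, mul_comm, hv]
    have hgfM : g - f ∈ M := Ideal.Quotient.eq.mp hgf
    set w : B1 X := (g - f) * (g - f) + (u * f - 1) * (u * f - 1) with hwdef
    have hwM : w ∈ M := M.add_mem (M.mul_mem_left _ hgfM) (M.mul_mem_left _ huf)
    refine ⟨zset w, ⟨w, hwM, rfl⟩, ?_⟩
    intro x hx
    have hxw : ((g : X → ℝ) x - (f : X → ℝ) x) * ((g : X → ℝ) x - (f : X → ℝ) x)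
        + ((u : X → ℝ) x * (f : X → ℝ) x - 1) * ((u : X → ℝ) x * (f : X → ℝ) x - 1) = 0 := by
      simpa [hwdef, zset] using hx
    have h1 : (g : X → ℝ) x - (f : X → ℝ) x = 0 := by
      have := mul_self_nonneg ((u : X → ℝ) x * (f : X → ℝ) x - 1)
      have := mul_self_nonneg ((g : X → ℝ) x - (f : X → ℝ) x)
      nlinarith
    have h2 : (u : X → ℝ) x * (f : X → ℝ) x - 1 = 0 := by
      have := mul_self_nonneg ((u : X → ℝ) x * (f : X → ℝ) x - 1)
      have := mul_self_nonneg ((g : X → ℝ) x - (f : X → ℝ) x)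
      nlinarith
    have hfg : (f : X → ℝ) x = (g : X → ℝ) x := by linarith
    have hfz : (f : X → ℝ) x ≠ 0 := by
      intro h0
      rw [h0, mul_zero] at h2
      norm_num at h2
    have := hg x
    rw [← hfg] at this
    exact lt_of_le_of_ne this (Ne.symm hfz)
  · rintro ⟨Z, ⟨m, hmM, rfl⟩, hpos⟩
    constructor
    · refine ⟨babs f, fun x => abs_nonneg _, ?_⟩
      rw [Ideal.Quotient.eq]
      refine mem_of_zset_subset hM hmM ?_
      intro x hx
      have hfx := hpos x hx
      show (babs f : X → ℝ) x - (f : X → ℝ) x = 0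
      have : |(f : X → ℝ) x| = (f : X → ℝ) x := abs_of_pos hfx
      simp [babs, this]
    · intro h0
      have hfM : f ∈ M := Ideal.Quotient.eq_zero_iff_mem.mp h0
      set w : B1 X := m * m + f * f with hwdef
      have hwM : w ∈ M := M.add_mem (M.mul_mem_left m hmM) (M.mul_mem_left f hfM)
      have hwne : ∀ x, (w : X → ℝ) x ≠ 0 := by
        intro x hx
        have hxw : (m : X → ℝ) x * (m : X → ℝ) x + (f : X → ℝ) x * (f : X → ℝ) x = 0 := by
          simpa [hwdef] using hx
        have hm0 : (m : X → ℝ) x = 0 := by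
          have := mul_self_nonneg ((f : X → ℝ) x)
          have := mul_self_nonneg ((m : X → ℝ) x)
          nlinarith
        have hfx := hpos x hm0
        rw [hm0, zero_mul, zero_add, mul_self_eq_zero] at hxw
        exact hfx.ne' hxw
      exact hM.ne_top (Ideal.eq_top_of_isUnit_mem _ hwM (isUnit_of_ne_zero' hwne))
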